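/- arXiv:2306.05557 — 4 statements merged into one kernel-verified Lean document; each statement's English description precedes it below -/
import Mathlib

section
/- Let d > 0, h ∈ [0,1], p ∈ (0, 0.5] with p - d²p + 2dhp + 2d²hp ≠ 0 and 1 + d(2h-1) ≠ 0. For a test node t with local homophily ratio h_t ∈ [0,1], degree d, class 0 and features (0.5+p, 0.5-p), let r_t = (1/2)·(1+d+p+dp(2h_t-1), 1-p+d(1+p-2h_t p)) and let W be the optimal weight matrix from the training setup. Then z_t := r_t·W = (1/(1+d(2h-1)))·(1+d(h+h_t-1), d(h-h_t)). -/
/-- For a class-0 test node with local homophily `ht`, the logit vector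
`z_t = r_t · W` has the closed form `(1/(1+d(2h-1)))·(1+d(h+ht-1), d(h-ht))`. -/
theorem stmt1 (d h p ht : ℝ) (hd : 0 < d) (hh : h ∈ Set.Icc (0:ℝ) 1)
    (hp : p ∈ Set.Ioc (0:ℝ) 0.5) (hht : ht ∈ Set.Icc (0:ℝ) 1)
    (h2 : p - d ^ 2 * p + 2 * d * h * p + 2 * d ^ 2 * h * p ≠ 0)
    (h1 : 1 + d * (2 * h - 1) ≠ 0) :
    let c : ℝ := 1 / (2 * (p - d ^ 2 * p + 2 * d * h * p + 2 * d ^ 2 * h * p))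
    let a : ℝ := 1 + d + p + d * p * (2 * h - 1)
    let b : ℝ := -1 + p - d * (1 + p - 2 * h * p)
    let rt : ℝ × ℝ := ((1/2) * (1 + d + p + d * p * (2 * ht - 1)),
                       (1/2) * (1 - p + d * (1 + p - 2 * ht * p)))
    let zt : ℝ × ℝ := (rt.1 * (c * a) + rt.2 * (c * b), rt.1 * (c * b) + rt.2 * (c * a))
    zt = ((1 / (1 + d * (2 * h - 1))) * (1 + d * (h + ht - 1)),
          (1 / (1 + d * (2 * h - 1))) * (d * (h - ht))) := by
  simp only []
  norm_num
  have hp0 : p ≠ 0 := hp.1.ne'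
  have hd1 : 1 + d ≠ 0 := by positivity
  have hfac : p - d ^ 2 * p + 2 * d * h * p + 2 * d ^ 2 * h * p = p * (1 + d) * (1 + d * (2 * h - 1)) := by ring
  rw [hfac]
  constructor <;> (field_simp; ring)
end

section
/- (Theorem 1) Under the one-layer homophilous GNN model, for a test node t of class 0 with local homophily ratio h_t = h + α_t, the output logit vector satisfies z_t = (1,0) + b₁·(α_t, -α_t) where b₁ = d/(1 + d(2h-1)), i.e., z_t - z(α_t = 0) = b₁·(α_t, -α_t). -/
/-- Theorem 1: under the one-layer homophilous GNN, the class-0 test node's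
logits satisfy `z(h+α) = (1 + b₁α, -b₁α)` and `z(h+α) - z(h) = b₁·(α, -α)`
with `b₁ = d/(1+d(2h-1))`. -/
theorem stmt2 (d h p αt : ℝ) (hd : 0 < d) (hh : h ∈ Set.Icc (0:ℝ) 1)
    (hp : p ∈ Set.Ioc (0:ℝ) 0.5) (hα : αt ∈ Set.Icc (-h) (1 - h))
    (h1 : 1 + d * (2 * h - 1) ≠ 0)
    (h2 : p * (1 - d ^ 2 + 2 * d * h + 2 * d ^ 2 * h) ≠ 0) :
    let c : ℝ := 1 / (2 * (p - d ^ 2 * p + 2 * d * h * p + 2 * d ^ 2 * h * p))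
    let a : ℝ := 1 + d + p + d * p * (2 * h - 1)
    let b : ℝ := -1 + p - d * (1 + p - 2 * h * p)
    let r : ℝ → ℝ × ℝ := fun x => ((1/2) * (1 + d + p + d * p * (2 * x - 1)),
                                   (1/2) * (1 - p + d * (1 + p - 2 * x * p)))
    let z : ℝ → ℝ × ℝ := fun x =>
      ((r x).1 * (c * a) + (r x).2 * (c * b), (r x).1 * (c * b) + (r x).2 * (c * a))
    let b₁ : ℝ := d / (1 + d * (2 * h - 1))
    z (h + αt) = (1 + b₁ * αt, -(b₁ * αt)) ∧
    z (h + αt) - z h = (b₁ * αt, -(b₁ * αt)) := by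
  intro c a b r z b₁
  have hden : 2 * (p - d ^ 2 * p + 2 * d * h * p + 2 * d ^ 2 * h * p) ≠ 0 := by
    intro h0
    apply h2
    nlinarith [h0]
  have key : z (h + αt) = (1 + b₁ * αt, -(b₁ * αt)) := by
    simp only [z, r, c, a, b, b₁, Prod.mk.injEq]
    constructor <;> (field_simp; rw [div_eq_iff h2]; ring)
  refine ⟨key, ?_⟩
  have key0 : z h = (1, 0) := by
    simp only [z, r, c, a, b, Prod.mk.injEq]
    constructor <;> (field_simp; rw [div_eq_iff h2]; ring)
  rw [key, key0, Prod.ext_iff]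
  simp
end

section
/- (Theorem 2) Under the heterophilous GNN model F' = (X ∥ AX)W with the pseudo-inverse optimal weight matrix, the logit vector for a class-0 test node with local homophily ratio h_t is z_t = (1/(1+d²(2h-1)²))·(1 + d²(2h-1)(h+h_t-1), d²(2h-1)(h-h_t)). Consequently, writing h_t = h + α_t, z_t = (1,0) + b₁'·(α_t, -α_t) where b₁' = d²(2h-1)/(1 + d²(2h-1)²). -/
set_option maxHeartbeats 1000000


/-- Theorem 2: the heterophilous GNN `F' = (X ∥ AX)W`, with `W` the
minimum-norm (right pseudo-inverse) solution of the reduced training system,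
outputs for a class-0 test node with local homophily `ht` the logits
`z_t = (1/(1+d²(2h-1)²))·(1 + d²(2h-1)(h+ht-1), d²(2h-1)(h-ht))`;
equivalently `z_t = (1,0) + b₁'·(ht-h, -(ht-h))` with
`b₁' = d²(2h-1)/(1+d²(2h-1)²)`. -/
theorem stmt9 (d h p ht : ℝ) (hd : 0 < d) (hh : h ∈ Set.Icc (0:ℝ) 1)
    (hp : p ∈ Set.Ioc (0:ℝ) 0.5) (hht : ht ∈ Set.Icc (0:ℝ) 1)
    (R : Matrix (Fin 2) (Fin 4) ℝ)
    (hR : R = (1/2 : ℝ) • Matrix.of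
      ![![1 + p, 1 - p, d + d * p * (2 * h - 1), d * (1 + p - 2 * h * p)],
        ![1 - p, 1 + p, d * (1 + p - 2 * h * p), d + d * p * (2 * h - 1)]])
    (hdet : IsUnit (R * R.transpose).det) :
    let W : Matrix (Fin 4) (Fin 2) ℝ := R.transpose * (R * R.transpose)⁻¹
    let rt : Fin 4 → ℝ := (1/2 : ℝ) •
      ![1 + p, 1 - p, d + d * p * (2 * ht - 1), d * (1 + p - 2 * ht * p)]
    let z : Fin 2 → ℝ := Matrix.vecMul rt W
    let b₁' : ℝ := d ^ 2 * (2 * h - 1) / (1 + d ^ 2 * (2 * h - 1) ^ 2)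
    z 0 = (1 / (1 + d ^ 2 * (2 * h - 1) ^ 2)) * (1 + d ^ 2 * (2 * h - 1) * (h + ht - 1)) ∧
    z 1 = (1 / (1 + d ^ 2 * (2 * h - 1) ^ 2)) * (d ^ 2 * (2 * h - 1) * (h - ht)) ∧
    z 0 = 1 + b₁' * (ht - h) ∧ z 1 = -(b₁' * (ht - h)) := by
  intro W rt z b₁'
  have hp0 : p ≠ 0 := ne_of_gt hp.1
  have hD : (1 + d ^ 2 * (2 * h - 1) ^ 2) ≠ 0 := by positivity
  have hd2 : (1 + d ^ 2) ≠ 0 := by positivity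
  have hM : (R * R.transpose).det = (1 + d ^ 2) * p ^ 2 * (1 + d ^ 2 * (2 * h - 1) ^ 2) := by
    subst hR
    simp only [Matrix.det_fin_two, Matrix.mul_apply, Fin.sum_univ_four,
      Matrix.transpose_apply, Matrix.smul_apply, Matrix.of_apply, smul_eq_mul,
      Matrix.cons_val', Matrix.cons_val_zero, Matrix.cons_val_one, Matrix.head_cons,
      Matrix.empty_val', Matrix.cons_val_fin_one, Matrix.head_fin_const,
      Matrix.cons_val_two, Matrix.cons_val_three, Matrix.tail_cons]
    ring
  have hz : ∀ j, z j = ∑ i, rt i * (R.transpose * ((R * R.transpose).det⁻¹ •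
      (R * R.transpose).adjugate)) i j := by
    intro j
    simp [z, W, Matrix.inv_def, Ring.inverse_eq_inv', Matrix.vecMul, dotProduct]
  have h0 := hz 0
  have h1 := hz 1
  rw [hM] at h0 h1
  subst hR
  simp only [Matrix.adjugate_fin_two, Matrix.mul_apply, Fin.sum_univ_four, Fin.sum_univ_two,
    Matrix.transpose_apply, Matrix.smul_apply, Matrix.of_apply, smul_eq_mul,
    Matrix.cons_val', Matrix.cons_val_zero, Matrix.cons_val_one, Matrix.head_cons,
    Matrix.empty_val', Matrix.cons_val_fin_one, Matrix.head_fin_const,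
    Matrix.cons_val_two, Matrix.cons_val_three, Matrix.tail_cons,
    rt, Pi.smul_apply] at h0 h1
  refine ⟨?_, ?_, ?_, ?_⟩
  · rw [h0]; field_simp; ring
  · rw [h1]; field_simp; ring
  · rw [h0]; show _ = 1 + (d ^ 2 * (2 * h - 1) / (1 + d ^ 2 * (2 * h - 1) ^ 2)) * (ht - h)
    field_simp; ring
  · rw [h1]; show _ = -((d ^ 2 * (2 * h - 1) / (1 + d ^ 2 * (2 * h - 1) ^ 2)) * (ht - h))
    field_simp; ring
end

section
/- In the one-layer homophilous GNN model with 0 ≤ h < 0.5, the condition b₁ < 0 (which causes performance to degrade as the test node's local homophily increases) holds if and only if the degree satisfies d > 1/(1 - 2h). In contrast, for 0.5 < h ≤ 1, b₁ > 0 holds for every degree d > 0. Hence the heterophilous and homophilous regimes are asymmetric: degradation under increased homophily requires a degree threshold, while degradation under decreased homophily does not. -/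
/-- Asymmetry of the two regimes: for `0 ≤ h < 0.5`, `b₁ < 0` iff the degree
exceeds the threshold `1/(1-2h)`; for `0.5 < h ≤ 1`, `b₁ > 0` for every
degree `d > 0`. -/
theorem stmt18 (d h : ℝ) (hd : 0 < d) :
    (0 ≤ h → h < 0.5 →
      (d / (1 + d * (2 * h - 1)) < 0 ↔ d > 1 / (1 - 2 * h))) ∧
    (0.5 < h → h ≤ 1 → d / (1 + d * (2 * h - 1)) > 0) := by
  constructor
  · intro _ h5
    have h2 : 0 < 1 - 2 * h := by linarith
    constructor
    · intro hlt
      have hden : 1 + d * (2 * h - 1) < 0 := by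
        by_contra hnn
        push_neg at hnn
        rcases eq_or_lt_of_le hnn with he | hp
        · rw [← he, div_zero] at hlt; linarith
        · exact absurd (div_pos hd hp) (by linarith)
      rw [gt_iff_lt, div_lt_iff₀ h2]
      nlinarith
    · intro hgt
      rw [gt_iff_lt, div_lt_iff₀ h2] at hgt
      have hden : 1 + d * (2 * h - 1) < 0 := by nlinarith
      exact div_neg_of_pos_of_neg hd hden
  · intro h5 _
    have hden : 0 < 1 + d * (2 * h - 1) := by nlinarith
    exact div_pos hd hden
end
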